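/- For every integer p ≥ 1 there exists a constant C = C(p) > 0 with the following property. Let N ≥ 1 be an integer, let 𝒜 ⊂ ℤ be an admissible set with |a| ≤ N for all a ∈ 𝒜, let a_1, …, a_p be pairwise distinct elements of 𝒜, and let m ∈ [1,2]. Then the p×p determinant D whose (j,i) entry (1 ≤ i,j ≤ p) is the j-th derivative at m of the function t ↦ √(a_i² + t) satisfies |D| ≥ C N^{−2p²}. -/

import Mathlib

open Real Finset Matrix

noncomputable def coefc (n : ℕ) : ℝ := ∏ i ∈ Finset.range n, ((1:ℝ)/2 - i)

lemma coefc_ne (n : ℕ) : coefc n ≠ 0 := by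
  unfold coefc
  apply Finset.prod_ne_zero_iff.2
  intro i _
  rcases Nat.eq_zero_or_pos i with h | h
  · subst h; norm_num
  · have : (1:ℝ) ≤ i := by exact_mod_cast h
    intro hc; nlinarith

lemma iter_sqrt (q : ℝ) (hq : 0 ≤ q) (n : ℕ) :
    ∀ t : ℝ, 0 < t →
      iteratedDeriv n (fun s => Real.sqrt (q + s)) t
        = coefc n * (q + t) ^ ((1:ℝ)/2 - n) := by
  induction n with
  | zero =>
    intro t ht
    simp [coefc, Real.sqrt_eq_rpow]
  | succ n ih =>
    intro t ht
    rw [iteratedDeriv_succ]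
    have hev : (iteratedDeriv n (fun s => Real.sqrt (q + s)))
        =ᶠ[nhds t] (fun s => coefc n * (q + s) ^ ((1:ℝ)/2 - n)) := by
      filter_upwards [Ioi_mem_nhds ht] with s hs
      exact ih s hs
    rw [hev.deriv_eq]
    have hx : (0:ℝ) < q + t := by linarith
    have h1 : HasDerivAt (fun s : ℝ => q + s) 1 t := by
      simpa using (hasDerivAt_id t).const_add q
    have h2 : HasDerivAt (fun x : ℝ => x ^ ((1:ℝ)/2 - n))
        (((1:ℝ)/2 - n) * (q + t) ^ ((1:ℝ)/2 - n - 1)) (q + t) :=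
      Real.hasDerivAt_rpow_const (Or.inl hx.ne')
    have h3 : HasDerivAt (fun s : ℝ => (q + s) ^ ((1:ℝ)/2 - n))
        ((((1:ℝ)/2 - n) * (q + t) ^ ((1:ℝ)/2 - n - 1)) * 1) t := h2.comp t h1
    have h4 := (h3.const_mul (coefc n)).deriv
    rw [h4]
    have h5 : coefc (n+1) = coefc n * ((1:ℝ)/2 - n) := by
      rw [coefc, Finset.prod_range_succ, ← coefc]
    rw [h5]
    have h6 : ((1:ℝ)/2 - (n+1:ℕ)) = (1:ℝ)/2 - n - 1 := by push_cast; ring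
    rw [h6]
    ring

lemma rpow_split (x : ℝ) (hx : 0 < x) (n : ℕ) :
    x ^ ((1:ℝ)/2 - (n+1:ℕ)) = x ^ (-((1:ℝ)/2)) * (x⁻¹) ^ n := by
  have h : ((1:ℝ)/2 - ((n+1:ℕ):ℝ)) = (-((1:ℝ)/2)) + (-(n:ℝ)) := by push_cast; ring
  rw [h, Real.rpow_add hx, Real.rpow_neg hx.le (n:ℝ), Real.rpow_natCast, inv_pow]

theorem stmt_1 (p : ℕ) (hp : 1 ≤ p) :
    ∃ C : ℝ, 0 < C ∧
      ∀ (N : ℕ), 1 ≤ N →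
      ∀ (A : Finset ℤ), (∀ j ∈ A, j ≠ 0 → -j ∉ A) →
        (∀ x ∈ A, |x| ≤ (N : ℤ)) →
      ∀ (a : Fin p → ℤ), Function.Injective a → (∀ i, a i ∈ A) →
      ∀ m ∈ Set.Icc (1:ℝ) 2,
        C * ((N : ℝ) ^ (2 * p^2))⁻¹ ≤
          |(Matrix.of fun (j i : Fin p) =>
              iteratedDeriv (j.1 + 1) (fun t : ℝ => Real.sqrt ((a i : ℝ)^2 + t)) m).det| := by
  classical
  set K : ℕ := ∑ i : Fin p, (Finset.Ioi i).card with hK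
  have h2K : 2 * K = p * (p - 1) := by
    have h1 : K = ∑ i ∈ Finset.range p, (p - 1 - i) := by
      rw [hK, ← Fin.sum_univ_eq_sum_range (fun i => p - 1 - i)]
      exact Finset.sum_congr rfl fun i _ => Fin.card_Ioi i
    have h2 : ∑ i ∈ Finset.range p, (p - 1 - i) = ∑ i ∈ Finset.range p, i := by
      rw [← Finset.sum_range_reflect]
      apply Finset.sum_congr rfl
      intro i hi
      simp only [Finset.mem_range] at hi
      omega
    have h3 := Finset.sum_range_id_mul_two p
    calc 2 * K = (∑ i ∈ Finset.range p, i) * 2 := by rw [h1, h2]; ring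
      _ = p * (p - 1) := h3
  have hKval : p ^ 2 = 2 * K + p := by
    rw [h2K]
    obtain ⟨q, rfl⟩ : ∃ q, p = q + 1 := ⟨p - 1, by omega⟩
    simp only [Nat.add_sub_cancel]
    ring
  set P1 : ℝ := ∏ j : Fin p, |coefc (j.1 + 1)| with hP1
  have hP1pos : 0 < P1 :=
    Finset.prod_pos fun j _ => abs_pos.2 (coefc_ne _)
  refine ⟨P1 * ((1:ℝ)/3)^p * ((1:ℝ)/9)^K, by positivity, ?_⟩
  intro N hN A hadm hbd a hinj hmem m hm
  obtain ⟨hm1, hm2⟩ := hm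
  have hN1 : (1:ℝ) ≤ (N:ℝ) := by exact_mod_cast hN
  have hNpos : (0:ℝ) < N := by linarith
  set x : Fin p → ℝ := fun i => (a i : ℝ)^2 + m with hxdef
  have hx1 : ∀ i, (1:ℝ) ≤ x i := fun i => by
    have := sq_nonneg ((a i : ℝ)); simp only [hxdef]; nlinarith
  have hxpos : ∀ i, (0:ℝ) < x i := fun i => lt_of_lt_of_le one_pos (hx1 i)
  have hxle : ∀ i, x i ≤ 3 * (N:ℝ)^2 := by
    intro i
    have h1 : |a i| ≤ (N:ℤ) := hbd _ (hmem i)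
    have h2 : ((a i : ℝ))^2 ≤ (N:ℝ)^2 := by
      have := sq_le_sq' (neg_le_of_abs_le h1) (le_of_abs_le h1)
      exact_mod_cast this
    have h3 : (1:ℝ) ≤ (N:ℝ)^2 := by nlinarith
    simp only [hxdef]; nlinarith
  -- distinct squares
  have hsq : ∀ i k : Fin p, i ≠ k → (a i)^2 ≠ (a k)^2 := by
    intro i k hik h
    rcases (abs_eq_abs.1 ((sq_eq_sq_iff_abs_eq_abs _ _).1 h)) with h' | h'
    · exact hik (hinj h')
    · have hk0 : a k ≠ 0 := by
        intro h0; apply hik; apply hinj; rw [h', h0]; ring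
      exact hadm (a k) (hmem k) hk0 (h' ▸ hmem i)
  set V : Matrix (Fin p) (Fin p) ℝ := (Matrix.vandermonde (fun i => (x i)⁻¹))ᵀ with hV
  -- rewrite the matrix
  have hMeq : (Matrix.of fun (j i : Fin p) =>
      iteratedDeriv (j.1 + 1) (fun t : ℝ => Real.sqrt ((a i : ℝ)^2 + t)) m)
      = Matrix.of fun (j i : Fin p) =>
          coefc (j.1 + 1) * (x i ^ (-((1:ℝ)/2)) * V j i) := by
    ext j i
    have h1 := iter_sqrt ((a i : ℝ)^2) (sq_nonneg _) (j.1 + 1) m (by linarith)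
    simp only [Matrix.of_apply, hV, Matrix.transpose_apply, Matrix.vandermonde_apply]
    rw [h1]
    have h2 : ((a i:ℝ)^2 + m) = x i := rfl
    rw [h2, rpow_split (x i) (hxpos i) j.1]
  have e1 : (Matrix.of fun (j i : Fin p) =>
        coefc (j.1 + 1) * (x i ^ (-((1:ℝ)/2)) * V j i)).det
      = (∏ j : Fin p, coefc (j.1 + 1)) *
        (Matrix.of fun (j i : Fin p) => x i ^ (-((1:ℝ)/2)) * V j i).det :=
    Matrix.det_mul_column (fun j : Fin p => coefc (j.1 + 1)) _
  have e2 : (Matrix.of fun (j i : Fin p) => x i ^ (-((1:ℝ)/2)) * V j i).det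
      = (∏ i : Fin p, x i ^ (-((1:ℝ)/2))) * V.det :=
    Matrix.det_mul_row (fun i : Fin p => x i ^ (-((1:ℝ)/2))) V
  have e3 : V.det = ∏ i : Fin p, ∏ j ∈ Finset.Ioi i, ((x j)⁻¹ - (x i)⁻¹) := by
    rw [hV, Matrix.det_transpose, Matrix.det_vandermonde]
  rw [hMeq, e1, e2, e3, abs_mul, abs_mul, Finset.abs_prod, Finset.abs_prod, Finset.abs_prod, ← hP1]
  -- bound the middle product
  have hmid : ((3 * (N:ℝ)^2)⁻¹) ^ p ≤ ∏ i : Fin p, |x i ^ (-((1:ℝ)/2))| := by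
    calc ((3 * (N:ℝ)^2)⁻¹) ^ p = ∏ _i : Fin p, (3 * (N:ℝ)^2)⁻¹ := by
          rw [Finset.prod_const, Finset.card_univ, Fintype.card_fin]
      _ ≤ ∏ i : Fin p, |x i ^ (-((1:ℝ)/2))| := by
          apply Finset.prod_le_prod
          · intro i _; positivity
          · intro i _
            have hroot : x i ^ ((1:ℝ)/2) ≤ 3 * (N:ℝ)^2 := by
              calc x i ^ ((1:ℝ)/2) ≤ x i ^ (1:ℝ) :=
                    Real.rpow_le_rpow_of_exponent_le (hx1 i) (by norm_num)
                _ = x i := Real.rpow_one _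
                _ ≤ 3 * (N:ℝ)^2 := hxle i
            have habs : |x i ^ (-((1:ℝ)/2))| = (x i ^ ((1:ℝ)/2))⁻¹ := by
              rw [abs_of_pos (Real.rpow_pos_of_pos (hxpos i) _),
                Real.rpow_neg (hxpos i).le]
            rw [habs]
            exact inv_anti₀ (Real.rpow_pos_of_pos (hxpos i) _) hroot
  -- bound the vandermonde product
  have hvdm : ((9 * (N:ℝ)^4)⁻¹) ^ K ≤
      ∏ i : Fin p, |∏ j ∈ Finset.Ioi i, ((x j)⁻¹ - (x i)⁻¹)| := by
    rw [hK, ← Finset.prod_pow_eq_pow_sum]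
    apply Finset.prod_le_prod
    · intro i _; positivity
    · intro i _
      rw [Finset.abs_prod, ← Finset.prod_const]
      apply Finset.prod_le_prod
      · intro j _; positivity
      · intro j hj
        have hij : i ≠ j := (Finset.mem_Ioi.1 hj).ne
        have hxixj : x i * x j ≤ 9 * (N:ℝ)^4 := by
          have h1 := hxle i; have h2 := hxle j
          have h3 := hxpos i; have h4 := hxpos j
          nlinarith
        have hdiff : (1:ℝ) ≤ |x i - x j| := by
          have heq2 : x i - x j = (((a i)^2 - (a j)^2 : ℤ) : ℝ) := by
            simp only [hxdef]; push_cast; ring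
          rw [heq2]
          have hne : ((a i)^2 - (a j)^2 : ℤ) ≠ 0 := sub_ne_zero.2 (hsq i j hij)
          exact_mod_cast Int.one_le_abs hne
        have heq : (x j)⁻¹ - (x i)⁻¹ = (x i - x j) * ((x i)⁻¹ * (x j)⁻¹) := by
          field_simp
          rw [div_sub_div _ _ (hxpos j).ne' (hxpos i).ne']; ring
        rw [heq, abs_mul]
        have habs2 : |(x i)⁻¹ * (x j)⁻¹| = (x i * x j)⁻¹ := by
          rw [abs_of_pos (by positivity), mul_inv]
        rw [habs2]
        calc (9 * (N:ℝ)^4)⁻¹ ≤ (x i * x j)⁻¹ :=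
              inv_anti₀ (by positivity) hxixj
          _ = 1 * (x i * x j)⁻¹ := (one_mul _).symm
          _ ≤ |x i - x j| * (x i * x j)⁻¹ :=
              mul_le_mul_of_nonneg_right hdiff (by positivity)
  -- combine
  have hpow : ((N:ℝ) ^ (2 * p^2))⁻¹ = (((N:ℝ)^2)⁻¹)^p * (((N:ℝ)^4)⁻¹)^K := by
    rw [inv_pow, inv_pow, ← mul_inv, ← pow_mul, ← pow_mul, ← pow_add]
    congr 2
    omega
  calc P1 * ((1:ℝ)/3)^p * ((1:ℝ)/9)^K * ((N:ℝ) ^ (2 * p^2))⁻¹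
      = P1 * (((3 * (N:ℝ)^2)⁻¹) ^ p * ((9 * (N:ℝ)^4)⁻¹) ^ K) := by
        rw [hpow, mul_inv, mul_inv, mul_pow, mul_pow]
        ring_nf
    _ ≤ P1 * ((∏ i : Fin p, |x i ^ (-((1:ℝ)/2))|) *
          (∏ i : Fin p, |∏ j ∈ Finset.Ioi i, ((x j)⁻¹ - (x i)⁻¹)|)) := by
        apply mul_le_mul_of_nonneg_left _ hP1pos.le
        exact mul_le_mul hmid hvdm (by positivity)
          (Finset.prod_nonneg fun _ _ => abs_nonneg _)
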